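/- arXiv:1806.00330 — 4 statements merged into one kernel-verified Lean document; each statement's English description precedes it below -/
import Mathlib

section
/- For all natural numbers m, n ≥ 1, the matching number of the fractional power P_k^{m/n} (the m-th power of the n-subdivision of the path P_k) equals the matching number of the n-subdivision P_k^{1/n}, namely floor((nk−n+1)/2). -/
open SimpleGraph

/-- The matching number: maximum size of a matching. -/
noncomputable def matchingNumber {V : Type*} (G : SimpleGraph V) : ℕ :=
  sSup {n | ∃ M : G.Subgraph, M.IsMatching ∧ M.edgeSet.ncard = n}

/-- The `m`-th distance power of a graph. -/
def graphPow {V : Type*} (G : SimpleGraph V) (m : ℕ) : SimpleGraph V where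
  Adj x y := x ≠ y ∧ G.dist x y ≤ m
  symm := ⟨fun x y ⟨h1, h2⟩ => ⟨h1.symm, by rwa [SimpleGraph.dist_comm]⟩⟩
  loopless := ⟨fun x h => h.1 rfl⟩

/-- The `n`-subdivision of a graph: each edge `xy` (with `x < y`) is replaced by a
path `x, (xy)_1, …, (xy)_{n-1}, y` of length `n`. -/
def subdivision {V : Type*} [LinearOrder V] (G : SimpleGraph V) (n : ℕ) :
    SimpleGraph (V ⊕ ({e : V × V // e.1 < e.2 ∧ G.Adj e.1 e.2} × Fin (n - 1))) where
  Adj u v :=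
    match u, v with
    | .inl x, .inl y => n = 1 ∧ G.Adj x y
    | .inl x, .inr (e, i) => (i.val = 0 ∧ e.val.1 = x) ∨ (i.val = n - 2 ∧ e.val.2 = x)
    | .inr (e, i), .inl x => (i.val = 0 ∧ e.val.1 = x) ∨ (i.val = n - 2 ∧ e.val.2 = x)
    | .inr (e, i), .inr (f, j) => e = f ∧ (i.val + 1 = j.val ∨ j.val + 1 = i.val)
  symm := by
    constructor
    rintro (x | ⟨e, i⟩) (y | ⟨f, j⟩) h
    · exact ⟨h.1, h.2.symm⟩
    · exact h
    · exact h
    · exact ⟨h.1.symm, h.2.symm⟩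
  loopless := by
    constructor
    rintro (x | ⟨e, i⟩) h
    · exact G.loopless.irrefl x h.2
    · rcases h with ⟨-, h | h⟩ <;> omega

/-- A matching is maximal if it cannot be extended to a larger matching. -/
def IsMaximalMatching {V : Type*} {G : SimpleGraph V} (M : G.Subgraph) : Prop :=
  M.IsMatching ∧
    ∀ M' : G.Subgraph, M'.IsMatching → M.edgeSet ⊆ M'.edgeSet → M.edgeSet = M'.edgeSet

/-- The saturation number: minimum size of a maximal matching. -/
noncomputable def satNumber {V : Type*} (G : SimpleGraph V) : ℕ :=
  sInf {n | ∃ M : G.Subgraph, IsMaximalMatching M ∧ M.edgeSet.ncard = n}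

/-- The friendship graph `F_k`: `k` triangles sharing the common vertex `0`;
the `i`-th triangle has vertices `0, 2i+1, 2i+2`. -/
def friendshipGraph (k : ℕ) : SimpleGraph (Fin (2 * k + 1)) :=
  SimpleGraph.fromRel (fun x y => x.val = 0 ∨ (x.val + 1 = y.val ∧ y.val % 2 = 0))

/-- The chain triangular cactus `T_k`: `k` triangles in a chain, the `i`-th triangle
having vertices `2i, 2i+1, 2i+2` and sharing cut-vertices with its neighbours. -/
def chainTriangularCactus (k : ℕ) : SimpleGraph (Fin (2 * k + 1)) :=
  SimpleGraph.fromRel (fun x y => y.val = x.val + 1 ∨ (y.val = x.val + 2 ∧ x.val % 2 = 0))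

/-- The complete bipartite graph `K_{m,n}` on `Fin (m+n)`, with parts
`{0,…,m-1}` and `{m,…,m+n-1}`. -/
def completeBipartite (m n : ℕ) : SimpleGraph (Fin (m + n)) :=
  SimpleGraph.fromRel (fun x y => x.val < m ∧ m ≤ y.val)


section Aux
open Function Subgraph


lemma verts_ncard_matching {V : Type*} [Fintype V] {G : SimpleGraph V} {M : G.Subgraph}
    (hM : M.IsMatching) : M.verts.ncard = 2 * M.edgeSet.ncard := by
  classical
  have h4 : Fintype.card M.verts = 2 * M.coe.edgeFinset.card := by
    rw [← M.coe.sum_degrees_eq_twice_card_edges]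
    simp only [Subgraph.coe_degree]
    rw [← Finset.card_univ, Finset.card_eq_sum_ones]
    refine Finset.sum_congr rfl fun x _ => ?_
    exact ((Subgraph.degree_eq_one_iff_existsUnique_adj).mpr (hM x.2)).symm
  have h6 : M.edgeSet.ncard = M.coe.edgeSet.ncard := by
    rw [← M.image_coe_edgeSet_coe,
      Set.ncard_image_of_injective _ (Sym2.map.injective Subtype.val_injective)]
  have h7 : M.coe.edgeSet.ncard = M.coe.edgeFinset.card := by
    rw [Set.ncard_eq_toFinset_card']
    simp [SimpleGraph.edgeFinset]
  have h8 : M.verts.ncard = Fintype.card M.verts := by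
    rw [Set.ncard_eq_toFinset_card', Set.toFinset_card]
  rw [h8, h4, h6, h7]


def pathMatching (N : ℕ) : (pathGraph N).Subgraph where
  verts := {v | v.val < 2 * (N / 2)}
  Adj a b := a.val / 2 = b.val / 2 ∧ a ≠ b ∧ a.val < 2 * (N / 2) ∧ b.val < 2 * (N / 2)
  adj_sub := by
    rintro a b ⟨h1, h2, h3, h4⟩
    rw [pathGraph_adj]
    have h5 : a.val ≠ b.val := fun h => h2 (Fin.ext h)
    omega
  edge_vert := by rintro a b ⟨h1, h2, h3, h4⟩; exact h3
  symm := by constructor; rintro a b ⟨h1, h2, h3, h4⟩; exact ⟨h1.symm, h2.symm, h4, h3⟩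

lemma pathMatching_isMatching (N : ℕ) : (pathMatching N).IsMatching := by
  intro v hv
  have hv' : v.val < 2 * (N / 2) := hv
  have hN : 2 * (N / 2) ≤ N := by omega
  refine ⟨⟨2 * (v.val / 2) + (1 - v.val % 2), by omega⟩, ⟨by simp; omega, ?_, hv', by simp; omega⟩, ?_⟩
  · intro h
    have := congrArg Fin.val h
    simp at this
    omega
  · rintro y ⟨h1, h2, h3, h4⟩
    have h5 : y.val ≠ v.val := fun h => h2 (Fin.ext h.symm)
    apply Fin.ext
    simp
    omega

lemma pathMatching_verts_ncard (N : ℕ) : (pathMatching N).verts.ncard = 2 * (N / 2) := by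
  classical
  have hN : 2 * (N / 2) ≤ N := by omega
  have h : (pathMatching N).verts = Fin.castLE hN '' Set.univ := by
    ext v
    constructor
    · intro hv
      exact ⟨⟨v.val, hv⟩, Set.mem_univ _, rfl⟩
    · rintro ⟨a, -, rfl⟩
      exact a.isLt
  rw [h, Set.ncard_image_of_injective _ (Fin.castLE_injective hN), Set.ncard_univ]
  simp

variable {k n : ℕ}

abbrev SubV (k n : ℕ) := Fin k ⊕
  ({e : Fin k × Fin k // e.1 < e.2 ∧ (pathGraph k).Adj e.1 e.2} × Fin (n - 1))

-- basic division facts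
lemma div_lt_k (hk : 1 ≤ k) (hn : 1 ≤ n) {p : ℕ} (hp : p ≤ n * (k - 1)) : p / n < k := by
  have := Nat.div_le_div_right (c := n) hp
  rw [Nat.mul_div_cancel_left _ hn] at this
  omega

lemma div_lt_k' (hn : 1 ≤ n) {p : ℕ} (hp : p ≤ n * (k - 1)) (hr : p % n ≠ 0) :
    p / n + 1 < k := by
  have h1 := Nat.div_add_mod p n
  have h2 : p % n < n := Nat.mod_lt _ hn
  rcases Nat.lt_or_ge (p / n) (k - 1) with h | h
  · have hk : 1 ≤ k := by
      rcases Nat.eq_zero_or_pos k with rfl | h'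
      · simp at hp; omega
      · exact h'
    omega
  · exfalso
    have h3 : n * (k - 1) ≤ n * (p / n) := Nat.mul_le_mul_left n h
    omega


lemma succ_divmod (hn : 1 ≤ n) (p : ℕ) :
    (p % n = n - 1 ∧ (p + 1) / n = p / n + 1 ∧ (p + 1) % n = 0) ∨
    (p % n < n - 1 ∧ (p + 1) / n = p / n ∧ (p + 1) % n = p % n + 1) := by
  have h1 := Nat.div_add_mod p n
  have h2 : p % n < n := Nat.mod_lt _ hn
  rcases Nat.lt_or_ge (p % n) (n - 1) with h | h
  · right
    have e1 : (p % n + 1) / n = 0 := Nat.div_eq_of_lt (by omega)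
    have e2 : (p % n + 1) % n = p % n + 1 := Nat.mod_eq_of_lt (by omega)
    refine ⟨h, ?_, ?_⟩
    · rw [show p + 1 = n * (p / n) + (p % n + 1) by omega, Nat.mul_add_div hn, e1]
      omega
    · rw [show p + 1 = n * (p / n) + (p % n + 1) by omega, Nat.mul_add_mod, e2]
  · left
    have h3 : p % n = n - 1 := by omega
    refine ⟨h3, ?_, ?_⟩
    · rw [show p + 1 = n * (p / n + 1) by rw [Nat.mul_add]; omega,
        Nat.mul_div_cancel_left _ hn]
    · rw [show p + 1 = n * (p / n + 1) by rw [Nat.mul_add]; omega, Nat.mul_mod_right]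

def phi (hk : 1 ≤ k) (hn : 1 ≤ n) (p : Fin (n * (k - 1) + 1)) : SubV k n :=
  if h : p.val % n = 0 then
    Sum.inl ⟨p.val / n, div_lt_k hk hn (by omega)⟩
  else
    Sum.inr (⟨(⟨p.val / n, by have := div_lt_k' (k := k) hn (p := p.val) (by omega) h; omega⟩,
               ⟨p.val / n + 1, div_lt_k' (k := k) hn (by omega) h⟩),
             ⟨by simp [Fin.lt_def], by rw [pathGraph_adj]; left; rfl⟩⟩,
            ⟨p.val % n - 1, by have h2 : p.val % n < n := Nat.mod_lt _ hn; omega⟩)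

def psi : SubV k n → ℕ
  | .inl x => n * x.val
  | .inr (e, i) => n * e.val.1.val + i.val + 1

lemma psi_phi (hk : 1 ≤ k) (hn : 1 ≤ n) (p : Fin (n * (k - 1) + 1)) :
    psi (phi hk hn p) = p.val := by
  have h1 := Nat.div_add_mod p.val n
  unfold phi
  split
  · next h => simp [psi]; omega
  · next h => simp [psi]; omega

lemma phi_injective (hk : 1 ≤ k) (hn : 1 ≤ n) : Injective (phi hk hn) := by
  intro a b hab
  have := congrArg psi hab
  rw [psi_phi, psi_phi] at this
  exact Fin.ext this

lemma phi_adj_step (hk : 1 ≤ k) (hn : 1 ≤ n) (p q : Fin (n * (k - 1) + 1))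
    (h : p.val + 1 = q.val) :
    (subdivision (pathGraph k) n).Adj (phi hk hn p) (phi hk hn q) := by
  have hp1 := Nat.div_add_mod p.val n
  have hpm : p.val % n < n := Nat.mod_lt _ hn
  have hsd := succ_divmod hn p.val
  rw [h] at hsd
  unfold phi
  by_cases hp : p.val % n = 0 <;> by_cases hq : q.val % n = 0 <;>
    simp only [hp, hq, dif_pos, dif_neg, not_false_iff]
  · -- both ≡ 0 : n = 1
    have hn1 : n = 1 := by omega
    show n = 1 ∧ _
    refine ⟨hn1, ?_⟩
    rw [pathGraph_adj]
    left
    simp only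
    omega
  · -- p ≡ 0, q ≢ 0 : q % n = 1, q / n = p / n
    left
    exact ⟨by simp; omega, Fin.ext (by simp; omega)⟩
  · -- p ≢ 0, q ≡ 0 : p % n = n - 1
    right
    exact ⟨by simp; omega, Fin.ext (by simp; omega)⟩
  · -- both ≢ 0
    refine ⟨?_, ?_⟩
    · apply Subtype.ext
      apply Prod.ext <;> exact Fin.ext (by simp; omega)
    · left
      simp
      omega

lemma matchingNumber_eq {V : Type*} {G : SimpleGraph V} {c : ℕ}
    (h1 : ∃ M : G.Subgraph, M.IsMatching ∧ M.edgeSet.ncard = c)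
    (h2 : ∀ M : G.Subgraph, M.IsMatching → M.edgeSet.ncard ≤ c) :
    matchingNumber G = c := by
  obtain ⟨M, hM, hMc⟩ := h1
  have hmem : c ∈ {n | ∃ M : G.Subgraph, M.IsMatching ∧ M.edgeSet.ncard = n} := ⟨M, hM, hMc⟩
  have hbdd : BddAbove {n | ∃ M : G.Subgraph, M.IsMatching ∧ M.edgeSet.ncard = n} :=
    ⟨c, by rintro x ⟨M', hM', rfl⟩; exact h2 M' hM'⟩
  unfold matchingNumber
  apply le_antisymm
  · exact csSup_le ⟨c, hmem⟩ (by rintro x ⟨M', hM', rfl⟩; exact h2 M' hM')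
  · exact le_csSup hbdd hmem

def edgeEquiv (k : ℕ) :
    {e : Fin k × Fin k // e.1 < e.2 ∧ (pathGraph k).Adj e.1 e.2} ≃ Fin (k - 1) where
  toFun e := ⟨e.val.1.val, by
    obtain ⟨h1, h2⟩ := e.2
    rw [pathGraph_adj] at h2
    rw [Fin.lt_def] at h1
    have := e.val.2.isLt
    omega⟩
  invFun i := ⟨(⟨i.val, by have := i.isLt; omega⟩, ⟨i.val + 1, by have := i.isLt; omega⟩),
    by simp [Fin.lt_def], by rw [pathGraph_adj]; left; rfl⟩
  left_inv e := by
    obtain ⟨⟨a, b⟩, h1, h2⟩ := e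
    rw [pathGraph_adj] at h2
    rw [Fin.lt_def] at h1
    dsimp only at h1 h2 ⊢
    apply Subtype.ext
    have hab : a.val + 1 = b.val := by omega
    dsimp only
    rw [Prod.mk.injEq]
    exact ⟨Fin.ext rfl, Fin.ext hab⟩
  right_inv i := rfl

lemma card_subV (k n : ℕ) (hk : 1 ≤ k) (hn : 1 ≤ n) :
    Nat.card (Fin k ⊕ ({e : Fin k × Fin k // e.1 < e.2 ∧ (pathGraph k).Adj e.1 e.2} × Fin (n - 1)))
      = n * (k - 1) + 1 := by
  classical
  rw [Nat.card_sum, Nat.card_prod, Nat.card_congr (edgeEquiv k)]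
  simp only [Nat.card_eq_fintype_card, Fintype.card_fin]
  obtain ⟨k', rfl⟩ : ∃ k', k = k' + 1 := ⟨k - 1, by omega⟩
  obtain ⟨n', rfl⟩ : ∃ n', n = n' + 1 := ⟨n - 1, by omega⟩
  simp [Nat.mul_succ, Nat.succ_mul]
  ring

end Aux

theorem stmt5 (k m n : ℕ) (hk : 1 ≤ k) (hm : 1 ≤ m) (hn : 1 ≤ n) :
    matchingNumber (graphPow (subdivision (pathGraph k) n) m)
      = matchingNumber (subdivision (pathGraph k) n) ∧
    matchingNumber (graphPow (subdivision (pathGraph k) n) m) = (n * k - n + 1) / 2 := by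
  classical
  have : Fintype (SubV k n) := Fintype.ofFinite _
  set N := n * (k - 1) + 1 with hNdef
  have hNk : n * k - n + 1 = N := by
    obtain ⟨k', rfl⟩ : ∃ k', k = k' + 1 := ⟨k - 1, by omega⟩
    have h1 : n * (k' + 1) = n * k' + n := Nat.mul_succ n k'
    simp only [hNdef, Nat.add_sub_cancel]
    omega
  let f : pathGraph N →g subdivision (pathGraph k) n :=
    ⟨phi hk hn, by
      intro p q hpq
      rw [pathGraph_adj] at hpq
      rcases hpq with h | h
      · exact phi_adj_step hk hn p q h
      · exact ((phi_adj_step hk hn q p h).symm)⟩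
  have hub : ∀ (H : SimpleGraph (SubV k n)) (M : H.Subgraph), M.IsMatching →
      M.edgeSet.ncard ≤ N / 2 := by
    intro H M hM
    have h1 := verts_ncard_matching hM
    have h2 : M.verts.ncard ≤ N := by
      have h3 := Set.ncard_le_ncard (Set.subset_univ M.verts) Set.finite_univ
      rwa [Set.ncard_univ, card_subV k n hk hn] at h3
    omega
  have hedge : ∀ (H : SimpleGraph (SubV k n)) (M : H.Subgraph), M.IsMatching →
      M.verts.ncard = 2 * (N / 2) → M.edgeSet.ncard = N / 2 := by
    intro H M hM hv
    have := verts_ncard_matching hM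
    omega
  have hfinj : Function.Injective ⇑f := phi_injective hk hn
  let M1 := (pathMatching N).map f
  have hM1 : M1.IsMatching := (pathMatching_isMatching N).map f hfinj
  have hv1 : M1.verts.ncard = 2 * (N / 2) := by
    show (Subgraph.map f (pathMatching N)).verts.ncard = _
    rw [Subgraph.map_verts, Set.ncard_image_of_injective _ hfinj]
    exact pathMatching_verts_ncard N
  have e1 : M1.edgeSet.ncard = N / 2 := hedge _ M1 hM1 hv1
  have hsub : matchingNumber (subdivision (pathGraph k) n) = N / 2 :=
    matchingNumber_eq ⟨M1, hM1, e1⟩ (hub _)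
  have hle : subdivision (pathGraph k) n ≤ graphPow (subdivision (pathGraph k) n) m := by
    intro a b hab
    exact show a ≠ b ∧ (subdivision (pathGraph k) n).dist a b ≤ m from ⟨hab.ne, le_trans (SimpleGraph.dist_le hab.toWalk) (by simpa using hm)⟩
  let M2 := M1.map (SimpleGraph.Hom.ofLE hle)
  have hM2 : M2.IsMatching := hM1.map_ofLE hle
  have hv2 : M2.verts.ncard = 2 * (N / 2) := by
    show (Subgraph.map _ M1).verts.ncard = _
    rw [Subgraph.map_verts, SimpleGraph.Hom.coe_ofLE, Set.image_id]
    exact hv1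
  have e2 : M2.edgeSet.ncard = N / 2 := hedge _ M2 hM2 hv2
  have hpow : matchingNumber (graphPow (subdivision (pathGraph k) n) m) = N / 2 :=
    matchingNumber_eq ⟨M2, hM2, e2⟩ (hub _)
  rw [hpow, hsub, hNk]
  exact ⟨rfl, rfl⟩
end

section
/- For odd k and n = m, the matching number of the k-subdivision of K_{m,m} equals m(k+1)/2 + m(m−1)(k−1)/2. -/
open SimpleGraph

lemma two_mul_ncard_edgeSet {V : Type*} [Finite V] {G : SimpleGraph V} {M : G.Subgraph}
    (h : M.IsMatching) : M.verts.ncard = 2 * M.edgeSet.ncard := by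
  classical
  have := Fintype.ofFinite V
  set A := M.verts.toFinset with hA
  set B := M.edgeSet.toFinset with hB
  set g : V → Sym2 V := fun v => if hv : v ∈ M.verts then (h.toEdge ⟨v, hv⟩ : Sym2 V) else s(v, v) with hg
  have hmap : ∀ v ∈ A, g v ∈ B := by
    intro v hv
    rw [Set.mem_toFinset] at hv
    simp only [hg, dif_pos hv, Set.mem_toFinset, hB]
    exact (h.toEdge ⟨v, hv⟩).2
  have hcard := Finset.card_eq_sum_card_fiberwise hmap
  have hfib : ∀ e ∈ B, (A.filter fun v => g v = e).card = 2 := by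
    intro e he
    rw [Set.mem_toFinset] at he
    induction e using Sym2.ind with
    | _ a b =>
      rw [Subgraph.mem_edgeSet] at he
      have hne : a ≠ b := (M.adj_sub he).ne
      have hfil : (A.filter fun v => g v = s(a, b)) = {a, b} := by
        ext v
        simp only [Finset.mem_filter, Set.mem_toFinset, Finset.mem_insert, Finset.mem_singleton, hA]
        constructor
        · rintro ⟨hv, hgv⟩
          rw [hg] at hgv
          simp only [dif_pos hv] at hgv
          obtain ⟨w, hw, -⟩ := h hv
          have := h.toEdge_eq_of_adj hw
          rw [this] at hgv
          simp only at hgv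
          have : v ∈ s(a, b) := hgv ▸ Sym2.mem_mk_left v w
          rwa [Sym2.mem_iff] at this
        · rintro (rfl | rfl)
          · have hv : v ∈ M.verts := M.edge_vert he
            refine ⟨hv, ?_⟩
            rw [hg]; simp only [dif_pos hv]
            exact congrArg Subtype.val (h.toEdge_eq_of_adj he)
          · have hv : v ∈ M.verts := M.edge_vert he.symm
            refine ⟨hv, ?_⟩
            rw [hg]; simp only [dif_pos hv]
            have := congrArg Subtype.val (h.toEdge_eq_of_adj he.symm)
            simpa [Sym2.eq_swap] using this
      rw [hfil, Finset.card_insert_of_notMem (by simpa using hne), Finset.card_singleton]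
  rw [Finset.sum_congr rfl hfib, Finset.sum_const, smul_eq_mul] at hcard
  rw [Set.ncard_eq_toFinset_card', Set.ncard_eq_toFinset_card', hcard, mul_comm]


lemma cb_mem_iff {m : ℕ} (x y : Fin (m + m)) :
    (x < y ∧ (completeBipartite m m).Adj x y) ↔ (x.val < m ∧ m ≤ y.val) := by
  rw [completeBipartite, fromRel_adj, Fin.lt_def]
  have hx := x.isLt; have hy := y.isLt
  constructor
  · rintro ⟨h1, -, (h | h)⟩ <;> omega
  · rintro ⟨h1, h2⟩
    exact ⟨by omega, fun hxy => by have := congrArg Fin.val hxy; omega,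
      Or.inl ⟨h1, h2⟩⟩

def keEquiv (m : ℕ) :
    {e : Fin (m + m) × Fin (m + m) // e.1 < e.2 ∧ (completeBipartite m m).Adj e.1 e.2}
      ≃ Fin m × Fin m where
  toFun e := (⟨e.val.1.val, ((cb_mem_iff _ _).1 e.2).1⟩,
    ⟨e.val.2.val - m, by have h := ((cb_mem_iff _ _).1 e.2).2; have := e.val.2.isLt; omega⟩)
  invFun p := ⟨(⟨p.1.val, by have := p.1.isLt; omega⟩, ⟨m + p.2.val, by have := p.2.isLt; omega⟩),
    (cb_mem_iff _ _).2 ⟨p.1.isLt, Nat.le_add_right m _⟩⟩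
  left_inv e := by
    obtain ⟨⟨a, b⟩, he⟩ := e
    have h := (cb_mem_iff a b).1 he
    ext <;> simp <;> omega
  right_inv p := by ext <;> simp

def pm (m k : ℕ) : (subdivision (completeBipartite m m) k).Subgraph where
  verts := Set.univ
  Adj u v := match u, v with
    | .inl x, .inl y => k = 1 ∧ (y.val = x.val + m ∨ x.val = y.val + m)
    | .inl x, .inr (e, i) => e.val.2.val = e.val.1.val + m ∧
        ((i.val = 0 ∧ e.val.1 = x) ∨ (i.val = k - 2 ∧ e.val.2 = x))
    | .inr (e, i), .inl x => e.val.2.val = e.val.1.val + m ∧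
        ((i.val = 0 ∧ e.val.1 = x) ∨ (i.val = k - 2 ∧ e.val.2 = x))
    | .inr (e, i), .inr (f, j) => e = f ∧
        (if e.val.2.val = e.val.1.val + m
         then (i.val % 2 = 1 ∧ j.val = i.val + 1 ∧ j.val ≤ k - 3) ∨
              (j.val % 2 = 1 ∧ i.val = j.val + 1 ∧ i.val ≤ k - 3)
         else (i.val % 2 = 0 ∧ j.val = i.val + 1) ∨ (j.val % 2 = 0 ∧ i.val = j.val + 1))
  adj_sub := by
    rintro (x | ⟨e, i⟩) (y | ⟨f, j⟩) h
    · obtain ⟨hk1, hor⟩ := h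
      have hx := x.isLt; have hy := y.isLt
      refine ⟨hk1, ?_⟩
      rw [completeBipartite, SimpleGraph.fromRel_adj]
      exact ⟨fun hxy => by have := congrArg Fin.val hxy; omega, by omega⟩
    · exact h.2
    · exact h.2
    · obtain ⟨rfl, hp⟩ := h
      refine ⟨rfl, ?_⟩
      by_cases hs : e.val.2.val = e.val.1.val + m
      · rw [if_pos hs] at hp; omega
      · rw [if_neg hs] at hp; omega
  edge_vert := fun _ => Set.mem_univ _
  symm := by
    constructor
    rintro (x | ⟨e, i⟩) (y | ⟨f, j⟩) h
    · exact ⟨h.1, h.2.symm⟩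
    · exact h
    · exact h
    · obtain ⟨rfl, hp⟩ := h
      refine ⟨rfl, ?_⟩
      by_cases hs : e.val.2.val = e.val.1.val + m
      · rw [if_pos hs] at hp ⊢; tauto
      · rw [if_neg hs] at hp ⊢; tauto

lemma pm_isMatching (m k : ℕ) (hm : 1 ≤ m) (hk : Odd k) : (pm m k).IsMatching := by
  obtain ⟨t, ht⟩ := hk
  rintro (x | ⟨e, i⟩) -
  · -- branch vertex
    have hx2 := x.isLt
    by_cases hk1 : k = 1
    · -- k = 1 : partner is the opposite branch vertex
      by_cases hx : x.val < m
      · refine ⟨Sum.inl ⟨x.val + m, by omega⟩, ⟨hk1, Or.inl rfl⟩, ?_⟩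
        rintro (y | ⟨f, j⟩) h
        · obtain ⟨-, h2⟩ := h
          have := y.isLt
          exact congrArg Sum.inl (Fin.ext (show (y : ℕ) = x.val + m by omega))
        · have := j.isLt; omega
      · refine ⟨Sum.inl ⟨x.val - m, by omega⟩,
          ⟨hk1, Or.inr (show (x : ℕ) = x.val - m + m by omega)⟩, ?_⟩
        rintro (y | ⟨f, j⟩) h
        · obtain ⟨-, h2⟩ := h
          have := y.isLt
          exact congrArg Sum.inl (Fin.ext (show (y : ℕ) = x.val - m by omega))
        · have := j.isLt; omega
    · -- k ≥ 3 : partner is an internal vertex of the special path at x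
      have ht1 : 1 ≤ t := by omega
      by_cases hx : x.val < m
      · refine ⟨Sum.inr (⟨(x, ⟨x.val + m, by omega⟩),
          (cb_mem_iff _ _).2 ⟨hx, Nat.le_add_left m _⟩⟩, ⟨0, by omega⟩), ⟨rfl, Or.inl ⟨rfl, rfl⟩⟩, ?_⟩
        rintro (y | ⟨f, j⟩) h
        · obtain ⟨h1, -⟩ := h; omega
        · obtain ⟨hsp, (⟨hj0, hf1⟩ | ⟨hjk, hf2⟩)⟩ := h
          · have hf := (cb_mem_iff _ _).1 f.2
            have hv1 := congrArg Fin.val hf1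
            refine congrArg Sum.inr (Prod.ext ?_ (Fin.ext (show (j : ℕ) = 0 by omega)))
            exact Subtype.ext (Prod.ext_iff.2 ⟨hf1,
              Fin.ext (show (f.val.2 : ℕ) = x.val + m by omega)⟩)
          · have hf := (cb_mem_iff _ _).1 f.2
            have hv2 := congrArg Fin.val hf2
            omega
      · refine ⟨Sum.inr (⟨(⟨x.val - m, by omega⟩, x),
          (cb_mem_iff _ _).2 ⟨show (x : ℕ) - m < m by omega,
            show m ≤ (x : ℕ) by omega⟩⟩, ⟨k - 2, by omega⟩),
          ⟨show (x : ℕ) = x.val - m + m by omega, Or.inr ⟨rfl, rfl⟩⟩, ?_⟩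
        rintro (y | ⟨f, j⟩) h
        · obtain ⟨h1, -⟩ := h; omega
        · obtain ⟨hsp, (⟨hj0, hf1⟩ | ⟨hjk, hf2⟩)⟩ := h
          · have hf := (cb_mem_iff _ _).1 f.2
            have hv1 := congrArg Fin.val hf1
            omega
          · have hf := (cb_mem_iff _ _).1 f.2
            have hv2 := congrArg Fin.val hf2
            refine congrArg Sum.inr (Prod.ext ?_ (Fin.ext (show (j : ℕ) = k - 2 by omega)))
            exact Subtype.ext (Prod.ext_iff.2 ⟨Fin.ext
              (show (f.val.1 : ℕ) = x.val - m by omega), hf2⟩)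
  · -- internal vertex
    have hi := i.isLt
    have ht1 : 1 ≤ t := by omega
    have he := (cb_mem_iff _ _).1 e.2
    have he2 := e.val.2.isLt
    by_cases hs : e.val.2.val = e.val.1.val + m
    · -- special path
      by_cases hi0 : i.val = 0
      · refine ⟨Sum.inl e.val.1, ⟨hs, Or.inl ⟨hi0, rfl⟩⟩, ?_⟩
        rintro (y | ⟨f, j⟩) h
        · obtain ⟨-, (⟨-, h2⟩ | ⟨hik, -⟩)⟩ := h
          · exact congrArg Sum.inl h2.symm
          · omega
        · obtain ⟨rfl, hp⟩ := h
          rw [if_pos hs] at hp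
          omega
      · by_cases hik : i.val = k - 2
        · refine ⟨Sum.inl e.val.2, ⟨hs, Or.inr ⟨hik, rfl⟩⟩, ?_⟩
          rintro (y | ⟨f, j⟩) h
          · obtain ⟨-, (⟨hi0', -⟩ | ⟨-, h2⟩)⟩ := h
            · omega
            · exact congrArg Sum.inl h2.symm
          · obtain ⟨rfl, hp⟩ := h
            rw [if_pos hs] at hp
            have := j.isLt
            omega
        · by_cases hpar : i.val % 2 = 1
          · refine ⟨Sum.inr (e, ⟨i.val + 1, by omega⟩),
              ⟨rfl, by rw [if_pos hs]; exact Or.inl ⟨hpar, rfl, show (i : ℕ) + 1 ≤ k - 3 by omega⟩⟩, ?_⟩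
            rintro (y | ⟨f, j⟩) h
            · obtain ⟨-, (⟨hi0', -⟩ | ⟨hik', -⟩)⟩ := h <;> omega
            · obtain ⟨rfl, hp⟩ := h
              rw [if_pos hs] at hp
              exact congrArg Sum.inr (Prod.ext rfl (Fin.ext (show (j : ℕ) = i.val + 1 by omega)))
          · refine ⟨Sum.inr (e, ⟨i.val - 1, by omega⟩),
              ⟨rfl, by rw [if_pos hs]; exact Or.inr ⟨show ((i : ℕ) - 1) % 2 = 1 by omega, show (i : ℕ) = (i : ℕ) - 1 + 1 by omega, show (i : ℕ) ≤ k - 3 by omega⟩⟩, ?_⟩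
            rintro (y | ⟨f, j⟩) h
            · obtain ⟨-, (⟨hi0', -⟩ | ⟨hik', -⟩)⟩ := h <;> omega
            · obtain ⟨rfl, hp⟩ := h
              rw [if_pos hs] at hp
              exact congrArg Sum.inr (Prod.ext rfl (Fin.ext (show (j : ℕ) = i.val - 1 by omega)))
    · -- non-special path
      by_cases hpar : i.val % 2 = 0
      · refine ⟨Sum.inr (e, ⟨i.val + 1, by omega⟩),
          ⟨rfl, by rw [if_neg hs]; exact Or.inl ⟨hpar, rfl⟩⟩, ?_⟩
        rintro (y | ⟨f, j⟩) h
        · exact absurd h.1 hs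
        · obtain ⟨rfl, hp⟩ := h
          rw [if_neg hs] at hp
          exact congrArg Sum.inr (Prod.ext rfl (Fin.ext (show (j : ℕ) = i.val + 1 by omega)))
      · refine ⟨Sum.inr (e, ⟨i.val - 1, by omega⟩),
          ⟨rfl, by rw [if_neg hs]; exact Or.inr ⟨show ((i : ℕ) - 1) % 2 = 0 by omega, show (i : ℕ) = (i : ℕ) - 1 + 1 by omega⟩⟩, ?_⟩
        rintro (y | ⟨f, j⟩) h
        · exact absurd h.1 hs
        · obtain ⟨rfl, hp⟩ := h
          rw [if_neg hs] at hp
          exact congrArg Sum.inr (Prod.ext rfl (Fin.ext (show (j : ℕ) = i.val - 1 by omega)))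

theorem stmt12 (m k : ℕ) (hm : 1 ≤ m) (hk : Odd k) :
    matchingNumber (subdivision (completeBipartite m m) k)
      = m * ((k + 1) / 2) + m * (m - 1) * ((k - 1) / 2) := by
  set N := m * ((k + 1) / 2) + m * (m - 1) * ((k - 1) / 2) with hN
  have hcard : Nat.card (Fin (m + m) ⊕
      ({e : Fin (m + m) × Fin (m + m) // e.1 < e.2 ∧ (completeBipartite m m).Adj e.1 e.2}
        × Fin (k - 1))) = 2 * N := by
    rw [Nat.card_sum, Nat.card_prod, Nat.card_congr (keEquiv m), Nat.card_prod]
    simp only [Nat.card_eq_fintype_card, Fintype.card_fin]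
    obtain ⟨t, ht⟩ := hk
    obtain ⟨m', rfl⟩ : ∃ m', m = m' + 1 := ⟨m - 1, by omega⟩
    have h1 : (k + 1) / 2 = t + 1 := by omega
    have h2 : (k - 1) / 2 = t := by omega
    have h3 : k - 1 = 2 * t := by omega
    rw [hN, h1, h2, h3]
    simp only [Nat.add_sub_cancel]
    ring
  have hM := pm_isMatching m k hm hk
  have hA := two_mul_ncard_edgeSet hM
  have hverts : (pm m k).verts.ncard = 2 * N := by
    show (Set.univ : Set _).ncard = 2 * N
    rw [Set.ncard_univ, hcard]
  have hup : ∀ n ∈ {n | ∃ M : (subdivision (completeBipartite m m) k).Subgraph,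
      M.IsMatching ∧ M.edgeSet.ncard = n}, n ≤ N := by
    rintro n ⟨M, hMm, rfl⟩
    have h1 := two_mul_ncard_edgeSet hMm
    have h2 : M.verts.ncard ≤ 2 * N := by
      rw [← hcard, ← Set.ncard_univ]
      exact Set.ncard_le_ncard (Set.subset_univ _) Set.finite_univ
    omega
  have hmem : N ∈ {n | ∃ M : (subdivision (completeBipartite m m) k).Subgraph,
      M.IsMatching ∧ M.edgeSet.ncard = n} := ⟨pm m k, hM, by omega⟩
  rw [matchingNumber]
  exact le_antisymm (csSup_le ⟨N, hmem⟩ hup) (le_csSup ⟨N, hup⟩ hmem)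
end

section
/- For odd k and n > m, the matching number of the k-subdivision of K_{m,n} equals m(k+1)/2 + m(m−1)(k−1)/2 + m(n−m)·floor(k/2). -/
open SimpleGraph

namespace Stmt13

variable (m n k : ℕ)

abbrev V := Fin (m + n)
abbrev E := {e : V m n × V m n // e.1 < e.2 ∧ (completeBipartite m n).Adj e.1 e.2}
abbrev W := V m n ⊕ (E m n × Fin (k - 1))
abbrev SG := subdivision (completeBipartite m n) k

variable {m n k}

lemma cb_adj {x y : V m n} : (completeBipartite m n).Adj x y ↔
    x ≠ y ∧ ((x.val < m ∧ m ≤ y.val) ∨ (y.val < m ∧ m ≤ x.val)) := by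
  simp [completeBipartite, SimpleGraph.fromRel_adj]

lemma E_left (e : E m n) : e.1.1.val < m ∧ m ≤ e.1.2.val := by
  obtain ⟨⟨x, y⟩, hlt, hadj⟩ := e
  rcases cb_adj.mp hadj with ⟨-, h | h⟩
  · exact h
  · exact absurd hlt (by simp only [not_lt]; exact le_of_lt (by
      have : y.val < x.val := lt_of_lt_of_le h.1 h.2
      exact this))

def vert (k : ℕ) (e : E m n) (i : ℕ) : W m n k :=
  if h : 0 < i ∧ i < k then .inr (e, ⟨i - 1, by omega⟩)
  else if i = 0 then .inl e.1.1 else .inl e.1.2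

def pedge (k : ℕ) (e : E m n) (i : ℕ) : Sym2 (W m n k) :=
  s(vert k e i, vert k e (i + 1))

lemma vert_ne (e : E m n) : e.1.1 ≠ e.1.2 := ne_of_lt e.2.1

lemma vert_inj (e : E m n) {i j : ℕ} (hi : i ≤ k) (hj : j ≤ k)
    (h : vert k e i = vert k e j) : i = j := by
  by_cases h1 : 0 < i ∧ i < k <;> by_cases h2 : 0 < j ∧ j < k
  · simp only [vert, dif_pos h1, dif_pos h2, Sum.inr.injEq, Prod.mk.injEq,
      Fin.mk.injEq, true_and] at h
    omega
  · simp only [vert, dif_pos h1, dif_neg h2] at h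
    split_ifs at h <;> simp at h
  · simp only [vert, dif_pos h2, dif_neg h1] at h
    split_ifs at h <;> simp at h
  · simp only [vert, dif_neg h1, dif_neg h2] at h
    split_ifs at h with hi0 hj0 hj0
    · omega
    · exact absurd (Sum.inl.inj h) (vert_ne e)
    · exact absurd (Sum.inl.inj h).symm (vert_ne e)
    · omega

lemma vert_eq_inl {e : E m n} {i : ℕ} {x : V m n} (hi : i ≤ k)
    (h : vert k e i = .inl x) : (i = 0 ∧ x = e.1.1) ∨ (i = k ∧ x = e.1.2) := by
  by_cases h1 : 0 < i ∧ i < k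
  · simp [vert, dif_pos h1] at h
  · simp only [vert, dif_neg h1] at h
    split_ifs at h with hi0
    · exact Or.inl ⟨hi0, (Sum.inl.inj h).symm⟩
    · exact Or.inr ⟨by omega, (Sum.inl.inj h).symm⟩

lemma vert_eq_inr {e f : E m n} {i : ℕ} {t : Fin (k - 1)}
    (h : vert k e i = .inr (f, t)) : e = f ∧ i = t.val + 1 := by
  by_cases h1 : 0 < i ∧ i < k
  · simp only [vert, dif_pos h1, Sum.inr.injEq, Prod.mk.injEq, Fin.mk.injEq] at h
    obtain ⟨he, ht⟩ := h
    have := congrArg Fin.val ht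
    simp only [] at this
    exact ⟨he, by omega⟩
  · simp only [vert, dif_neg h1] at h
    split_ifs at h <;> simp at h


lemma vert_mid (e : E m n) {i : ℕ} (h1 : 0 < i) (h2 : i < k) :
    vert k e i = .inr (e, ⟨i - 1, by omega⟩) := dif_pos ⟨h1, h2⟩

lemma vert_zero (e : E m n) : vert k e 0 = .inl e.1.1 := by simp [vert]

lemma vert_last (e : E m n) (hk : 0 < k) : vert k e k = .inl e.1.2 := by
  unfold vert; rw [dif_neg (by omega), if_neg (by omega)]

lemma vert_mid' (e : E m n) (t : Fin (k - 1)) :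
    vert k e (t.val + 1) = .inr (e, t) := by
  have h2 : t.val + 1 < k := by have := t.2; omega
  rw [vert_mid e (Nat.succ_pos _) h2]
  exact congrArg _ (congrArg _ (Fin.ext (by simp)))

lemma adj_pedge (hk : 0 < k) (e : E m n) {i : ℕ} (hi : i < k) :
    (SG m n k).Adj (vert k e i) (vert k e (i + 1)) := by
  rcases Nat.eq_zero_or_pos i with rfl | hpos
  · simp only [zero_add]
    rcases Nat.lt_or_ge 1 k with h2 | h2
    · rw [vert_zero, vert_mid e one_pos h2]
      exact Or.inl ⟨rfl, rfl⟩
    · have hk1 : k = 1 := by omega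
      subst hk1
      rw [vert_zero, vert_last e hk]
      exact ⟨rfl, e.2.2⟩
  · rcases Nat.lt_or_ge (i + 1) k with h2 | h2
    · rw [vert_mid e hpos hi, vert_mid e (by omega) h2]
      exact ⟨rfl, Or.inl (by simp; omega)⟩
    · have : i + 1 = k := by omega
      rw [this, vert_mid e hpos hi, vert_last e hk]
      exact Or.inr ⟨by simp; omega, rfl⟩

lemma adj_class (hk : 0 < k) {u v : W m n k} (h : (SG m n k).Adj u v) :
    ∃ e : E m n, ∃ i, i < k ∧ s(u, v) = pedge k e i := by
  rcases u with x | ⟨f, t⟩ <;> rcases v with y | ⟨g, s⟩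
  · have h' : k = 1 ∧ (completeBipartite m n).Adj x y := h
    obtain ⟨hk1, hadj⟩ := h'
    subst hk1
    rcases lt_or_gt_of_ne hadj.ne with hxy | hxy
    · exact ⟨⟨(x, y), hxy, hadj⟩, 0, one_pos, by
        rw [pedge, vert_zero]; simp only [zero_add]; rw [vert_last _ one_pos]⟩
    · exact ⟨⟨(y, x), hxy, hadj.symm⟩, 0, one_pos, by
        rw [pedge, vert_zero]; simp only [zero_add]
        rw [vert_last _ one_pos, Sym2.eq_swap]⟩
  · have h' : (s.val = 0 ∧ g.1.1 = x) ∨ (s.val = k - 2 ∧ g.1.2 = x) := h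
    have hk2 : 2 ≤ k := by have := s.2; omega
    rcases h' with ⟨h1, h2⟩ | ⟨h1, h2⟩
    · refine ⟨g, 0, hk, ?_⟩
      have hv := vert_mid' (k := k) g s
      rw [show s.val + 1 = 1 by omega] at hv
      rw [pedge, vert_zero, h2]
      simp only [zero_add]
      rw [hv]
    · refine ⟨g, k - 1, by omega, ?_⟩
      have hv := vert_mid' (k := k) g s
      rw [show s.val + 1 = k - 1 by omega] at hv
      rw [pedge, show k - 1 + 1 = k by omega, vert_last _ hk, h2, hv,
        Sym2.eq_swap]
  · have h' : (t.val = 0 ∧ f.1.1 = y) ∨ (t.val = k - 2 ∧ f.1.2 = y) := h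
    have hk2 : 2 ≤ k := by have := t.2; omega
    rcases h' with ⟨h1, h2⟩ | ⟨h1, h2⟩
    · refine ⟨f, 0, hk, ?_⟩
      have hv := vert_mid' (k := k) f t
      rw [show t.val + 1 = 1 by omega] at hv
      rw [pedge, vert_zero, h2]
      simp only [zero_add]
      rw [hv, Sym2.eq_swap]
    · refine ⟨f, k - 1, by omega, ?_⟩
      have hv := vert_mid' (k := k) f t
      rw [show t.val + 1 = k - 1 by omega] at hv
      rw [pedge, show k - 1 + 1 = k by omega, vert_last _ hk, h2, hv]
  · have h' : f = g ∧ (t.val + 1 = s.val ∨ s.val + 1 = t.val) := h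
    obtain ⟨rfl, hts⟩ := h'
    rcases hts with h1 | h1
    · refine ⟨f, t.val + 1, by have := s.2; omega, ?_⟩
      rw [pedge, vert_mid', show t.val + 1 + 1 = s.val + 1 by omega, vert_mid']
    · refine ⟨f, s.val + 1, by have := t.2; omega, ?_⟩
      rw [pedge, vert_mid', show s.val + 1 + 1 = t.val + 1 by omega, vert_mid',
        Sym2.eq_swap]

lemma pedge_inj (hk : 0 < k) {e f : E m n} {i j : ℕ} (hi : i < k) (hj : j < k)
    (h : pedge k e i = pedge k f j) : e = f ∧ i = j := by
  rw [pedge, pedge, Sym2.eq_iff] at h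
  have key : e = f := by
    rcases Nat.lt_or_ge 1 k with hk2 | hk2
    · -- k ≥ 2 : each pedge contains an inr vertex labelled with its edge
      have he : ∃ a ≤ k, ∃ t : Fin (k-1), vert k e a = Sum.inr (e, t) ∧
          (a = i ∨ a = i + 1) := by
        rcases Nat.eq_zero_or_pos i with rfl | hpos
        · exact ⟨1, by omega, ⟨0, by omega⟩, by
            rw [vert_mid e one_pos (by omega)]
            exact congrArg _ (congrArg _ (Fin.ext (by norm_num))), Or.inr rfl⟩
        · exact ⟨i, by omega, ⟨i - 1, by omega⟩, by rw [vert_mid e hpos hi], Or.inl rfl⟩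
      obtain ⟨a, ha, t, hat, hai⟩ := he
      -- the corresponding vertex on the other side must be an inr with label f
      rcases h with ⟨h1, h2⟩ | ⟨h1, h2⟩
      · rcases hai with rfl | rfl
        · rw [hat] at h1
          exact (vert_eq_inr h1.symm).1.symm
        · rw [hat] at h2
          exact (vert_eq_inr h2.symm).1.symm
      · rcases hai with rfl | rfl
        · rw [hat] at h1
          exact (vert_eq_inr h1.symm).1.symm
        · rw [hat] at h2
          exact (vert_eq_inr h2.symm).1.symm
    · -- k = 1
      have hk1 : k = 1 := by omega
      subst hk1
      have hi0 : i = 0 := by omega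
      have hj0 : j = 0 := by omega
      subst hi0; subst hj0
      simp only [zero_add] at h
      rw [vert_zero, vert_zero, vert_last _ one_pos, vert_last _ one_pos] at h
      rcases h with ⟨h1, h2⟩ | ⟨h1, h2⟩
      · have h1' := Sum.inl.inj h1
        have h2' := Sum.inl.inj h2
        exact Subtype.ext (Prod.ext h1' h2')
      · have h1' := Sum.inl.inj h1
        have h2' := Sum.inl.inj h2
        exfalso
        have a1 := e.2.1
        have a2 := f.2.1
        rw [h1'] at a1
        rw [← h2'] at a2
        exact absurd a1 (not_lt.mpr (le_of_lt a2))
  subst key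
  rcases h with ⟨h1, h2⟩ | ⟨h1, h2⟩
  · exact ⟨rfl, vert_inj e (by omega) (by omega) h1⟩
  · have := vert_inj e (le_of_lt hi) (by omega) h1
    have := vert_inj e (by omega) (le_of_lt hj) h2
    omega



lemma gapBound (S : Finset ℕ) (a b : ℕ)
    (hsub : ∀ i ∈ S, a ≤ i ∧ i < b)
    (hgap : ∀ i ∈ S, ∀ j ∈ S, i < j → i + 2 ≤ j) :
    S.card ≤ (b - a + 1) / 2 := by
  classical
  have : S.card ≤ (Finset.range ((b - a + 1) / 2)).card := by
    apply Finset.card_le_card_of_injOn (fun i => (i - a) / 2)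
    · intro i hi
      rw [Finset.mem_coe, Finset.mem_range]
      dsimp only
      have := hsub i hi
      omega
    · intro i hi j hj hij
      have hij' : (i - a) / 2 = (j - a) / 2 := hij
      clear hij
      simp only [Finset.mem_coe] at hi hj
      rcases lt_trichotomy i j with h | h | h
      · have := hgap i hi j hj h
        have h1 := hsub i hi
        have h2 := hsub j hj
        omega
      · exact h
      · have := hgap j hj i hi h
        have h1 := hsub i hi
        have h2 := hsub j hj
        omega
  simpa using this

section Upper

open Finset in
lemma upper_bound (hk : Odd k) (M : (SG m n k).Subgraph) (hM : M.IsMatching) :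
    M.edgeSet.ncard ≤ m * n * ((k - 1) / 2) + m := by
  classical
  have hk1 : k % 2 = 1 := Nat.odd_iff.mp hk
  have hk0 : 0 < k := by omega
  -- the partner-uniqueness consequence of being a matching
  have huniq : ∀ {u v w : W m n k}, M.Adj u v → M.Adj u w → v = w := by
    intro u v w h1 h2
    exact ExistsUnique.unique (hM (M.edge_vert h1)) h1 h2
  set T : E m n → Finset ℕ :=
    fun e => (Finset.range k).filter (fun i => pedge k e i ∈ M.edgeSet) with hT
  -- gap property
  have hgap : ∀ e : E m n, ∀ i ∈ T e, ∀ j ∈ T e, i < j → i + 2 ≤ j := by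
    intro e i hi j hj hij
    by_contra hc
    have hji : j = i + 1 := by omega
    subst hji
    simp only [hT, Finset.mem_filter, Finset.mem_range] at hi hj
    have h1 : M.Adj (vert k e i) (vert k e (i + 1)) := Subgraph.mem_edgeSet.mp hi.2
    have h2 : M.Adj (vert k e (i + 1)) (vert k e (i + 1 + 1)) := Subgraph.mem_edgeSet.mp hj.2
    have := huniq h1.symm h2
    have := vert_inj e (by omega) (by omega) this
    omega
  -- decomposition of the edge set
  have hdecomp : M.edgeSet.ncard = ∑ e : E m n, (T e).card := by
    set S : Finset (Sym2 (W m n k)) :=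
      (Finset.univ.sigma (fun e : E m n => T e)).image (fun p => pedge k p.1 p.2) with hS
    have hinj : Set.InjOn (fun p : (_ : E m n) × ℕ => pedge k p.1 p.2)
        (Finset.univ.sigma (fun e : E m n => T e)) := by
      intro p hp q hq hpq
      simp only [Finset.coe_sigma, Set.mem_sigma_iff, hT, Finset.coe_filter,
        Set.mem_setOf_eq, Finset.mem_range] at hp hq
      obtain ⟨hef, hij⟩ := pedge_inj hk0 hp.2.1 hq.2.1 hpq
      exact Sigma.ext hef (heq_of_eq hij)
    have hcard : S.card = ∑ e : E m n, (T e).card := by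
      rw [hS, Finset.card_image_of_injOn hinj, Finset.card_sigma]
    have hset : M.edgeSet = ↑S := by
      ext x
      constructor
      · intro hx
        induction x with
        | _ u v =>
          have hadj : M.Adj u v := Subgraph.mem_edgeSet.mp hx
          obtain ⟨e, i, hik, hx'⟩ := adj_class hk0 (M.adj_sub hadj)
          rw [hS]
          simp only [Finset.coe_image, Set.mem_image, Finset.mem_coe, Finset.mem_sigma,
            Finset.mem_univ, true_and]
          refine ⟨⟨e, i⟩, ?_, hx'.symm⟩
          simp only [hT, Finset.mem_filter, Finset.mem_range]
          exact ⟨hik, by rw [← hx']; exact hx⟩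
      · intro hx
        rw [hS] at hx
        simp only [Finset.coe_image, Set.mem_image, Finset.mem_coe, Finset.mem_sigma,
          Finset.mem_univ, true_and] at hx
        obtain ⟨⟨e, i⟩, hmem, rfl⟩ := hx
        simp only [hT, Finset.mem_filter] at hmem
        exact hmem.2
    rw [hset, Set.ncard_coe_finset, hcard]
  -- the set of doubly-saturating original edges
  set D : Finset (E m n) :=
    Finset.univ.filter (fun e => 0 ∈ T e ∧ (k - 1) ∈ T e) with hD
  have hDm : D.card ≤ m := by
    have : D.card ≤ (Finset.range m).card := by
      apply Finset.card_le_card_of_injOn (fun e => e.1.1.val)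
      · intro e _
        rw [Finset.mem_coe, Finset.mem_range]
        exact (E_left e).1
      · intro e he f hf hef
        simp only [Finset.mem_coe, hD, Finset.mem_filter, Finset.mem_univ, true_and,
          hT, Finset.mem_range] at he hf
        have he0 := he.1.2
        have hf0 := hf.1.2
        have h1 : M.Adj (vert k e 0) (vert k e (0 + 1)) := Subgraph.mem_edgeSet.mp he0
        have h2 : M.Adj (vert k f 0) (vert k f (0 + 1)) := Subgraph.mem_edgeSet.mp hf0
        have hxy : e.1.1 = f.1.1 := Fin.ext hef
        rw [vert_zero] at h1 h2
        rw [hxy] at h1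
        have hpart : vert k e (0 + 1) = vert k f (0 + 1) := huniq h1 h2
        simp only [zero_add] at hpart
        rcases Nat.lt_or_ge 1 k with hk2 | hk2
        · rw [vert_mid e one_pos hk2, vert_mid f one_pos hk2] at hpart
          simp only [Sum.inr.injEq, Prod.mk.injEq] at hpart
          exact hpart.1
        · have hk1 : k = 1 := by omega
          rw [hk1, vert_last e one_pos, vert_last f one_pos] at hpart
          have := Sum.inl.inj hpart
          exact Subtype.ext (Prod.ext hxy this)
    simpa using this
  -- per-path bound
  have hTbound : ∀ e : E m n, (T e).card ≤ (k - 1) / 2 + (if e ∈ D then 1 else 0) := by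
    intro e
    have hsub0 : ∀ i ∈ T e, 0 ≤ i ∧ i < k := by
      intro i hi
      simp only [hT, Finset.mem_filter, Finset.mem_range] at hi
      exact ⟨Nat.zero_le _, hi.1⟩
    by_cases hDe : e ∈ D
    · rw [if_pos hDe]
      have := gapBound (T e) 0 k hsub0 (hgap e)
      omega
    · rw [if_neg hDe, add_zero]
      simp only [hD, Finset.mem_filter, Finset.mem_univ, true_and, not_and_or] at hDe
      rcases hDe with h0 | hl
      · have hsub : ∀ i ∈ T e, 1 ≤ i ∧ i < k := by
          intro i hi
          have := hsub0 i hi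
          rcases Nat.eq_zero_or_pos i with rfl | hp
          · exact absurd hi h0
          · exact ⟨hp, this.2⟩
        have := gapBound (T e) 1 k hsub (hgap e)
        omega
      · have hsub : ∀ i ∈ T e, 0 ≤ i ∧ i < k - 1 := by
          intro i hi
          have := hsub0 i hi
          rcases Nat.lt_or_ge i (k - 1) with hp | hp
          · exact ⟨Nat.zero_le _, hp⟩
          · have : i = k - 1 := by omega
            exact absurd (this ▸ hi) hl
        have := gapBound (T e) 0 (k - 1) hsub (hgap e)
        omega
  -- cardinality of E
  have hcardE : (Finset.univ : Finset (E m n)).card = m * n := by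
    rw [Finset.card_univ]
    have : Fintype.card (E m n) = Fintype.card (Fin m × Fin n) := by
      apply Fintype.card_congr
      refine ⟨fun e => (⟨e.1.1.val, (E_left e).1⟩, ⟨e.1.2.val - m, ?_⟩),
        fun p => ⟨(⟨p.1.val, by omega⟩, ⟨m + p.2.val, by omega⟩), ?_, ?_⟩, ?_, ?_⟩
      · have := (E_left e).2
        have := e.1.2.2
        omega
      · exact Fin.mk_lt_mk.mpr (by have := p.1.2; omega)
      · rw [cb_adj]
        refine ⟨fun hc => ?_, Or.inl ⟨p.1.2, Nat.le_add_right _ _⟩⟩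
        have := congrArg Fin.val hc
        simp at this
        have := p.1.2
        omega
      · intro e
        apply Subtype.ext
        apply Prod.ext <;> apply Fin.ext <;> simp
        · have := (E_left e).2
          omega
      · intro p
        apply Prod.ext <;> apply Fin.ext <;> simp
    rw [this]
    simp
  calc M.edgeSet.ncard = ∑ e : E m n, (T e).card := hdecomp
    _ ≤ ∑ e : E m n, ((k - 1) / 2 + (if e ∈ D then 1 else 0)) :=
        Finset.sum_le_sum (fun e _ => hTbound e)
    _ = m * n * ((k - 1) / 2) + D.card := by
        rw [Finset.sum_add_distrib, Finset.sum_const, Finset.sum_ite_mem,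
          Finset.univ_inter, Finset.sum_const, smul_eq_mul, smul_eq_mul,
          mul_one, hcardE]
    _ ≤ m * n * ((k - 1) / 2) + m := by omega

end Upper



section Lower

def special (e : E m n) : Prop := e.1.2.val = e.1.1.val + m

def allowed (k : ℕ) (e : E m n) (i : ℕ) : Prop :=
  i < k ∧ ((special e ∧ i % 2 = 0) ∨ (¬ special e ∧ i % 2 = 1 ∧ i + 1 < k))

variable (m n k) in
def M₀ : (SG m n k).Subgraph where
  verts := {w | ∃ e i, allowed k e i ∧ (w = vert k e i ∨ w = vert k e (i + 1))}
  Adj u v := ∃ e i, allowed k e i ∧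
    ((u = vert k e i ∧ v = vert k e (i + 1)) ∨ (u = vert k e (i + 1) ∧ v = vert k e i))
  adj_sub := by
    rintro u v ⟨e, i, hai, ⟨rfl, rfl⟩ | ⟨rfl, rfl⟩⟩
    · have h := hai.1
      exact adj_pedge (by omega) e h
    · have h := hai.1
      exact (adj_pedge (by omega) e h).symm
  edge_vert := by
    rintro u v ⟨e, i, hai, ⟨rfl, rfl⟩ | ⟨rfl, rfl⟩⟩
    · exact ⟨e, i, hai, Or.inl rfl⟩
    · exact ⟨e, i, hai, Or.inr rfl⟩
  symm := by
    constructor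
    rintro u v ⟨e, i, hai, ⟨rfl, rfl⟩ | ⟨rfl, rfl⟩⟩
    · exact ⟨e, i, hai, Or.inr ⟨rfl, rfl⟩⟩
    · exact ⟨e, i, hai, Or.inl ⟨rfl, rfl⟩⟩

lemma inc_unique (hk1 : k % 2 = 1) {w : W m n k} {e f : E m n} {i j : ℕ}
    (he : allowed k e i) (hf : allowed k f j)
    (hwe : w = vert k e i ∨ w = vert k e (i + 1))
    (hwf : w = vert k f j ∨ w = vert k f (j + 1)) : e = f ∧ i = j := by
  have hik := he.1
  have hjk := hf.1
  rcases w with x | ⟨g, t⟩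
  · -- w is an original vertex
    have key : ∀ (e' : E m n) (i' : ℕ), allowed k e' i' →
        ((Sum.inl x : W m n k) = vert k e' i' ∨ (Sum.inl x : W m n k) = vert k e' (i' + 1)) →
        special e' ∧ ((i' = 0 ∧ x = e'.1.1) ∨ (i' = k - 1 ∧ x = e'.1.2)) := by
      intro e' i' ha' hw'
      have hik' := ha'.1
      rcases hw' with hw' | hw'
      · rcases vert_eq_inl (le_of_lt hik') hw'.symm with ⟨h0, hx⟩ | ⟨h0, hx⟩
        · subst h0
          refine ⟨?_, Or.inl ⟨rfl, hx⟩⟩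
          rcases ha'.2 with h | h
          · exact h.1
          · omega
        · omega
      · rcases vert_eq_inl (by omega) hw'.symm with ⟨h0, hx⟩ | ⟨h0, hx⟩
        · omega
        · have hi' : i' = k - 1 := by omega
          refine ⟨?_, Or.inr ⟨hi', hx⟩⟩
          rcases ha'.2 with h | h
          · exact h.1
          · omega
    obtain ⟨hse, hce⟩ := key e i he hwe
    obtain ⟨hsf, hcf⟩ := key f j hf hwf
    have hse' : e.1.2.val = e.1.1.val + m := hse
    have hsf' : f.1.2.val = f.1.1.val + m := hsf
    rcases hce with ⟨hi0, hx⟩ | ⟨hi0, hx⟩ <;> rcases hcf with ⟨hj0, hy⟩ | ⟨hj0, hy⟩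
    · refine ⟨?_, by omega⟩
      apply Subtype.ext
      have h1 : e.1.1 = f.1.1 := hx ▸ hy ▸ rfl
      have h1' := congrArg Fin.val h1
      exact Prod.ext h1 (Fin.ext (by omega))
    · exfalso
      have a1 := (E_left e).1
      have a2 := (E_left f).2
      have b1 := congrArg Fin.val hx
      have b2 := congrArg Fin.val hy
      omega
    · exfalso
      have a1 := (E_left f).1
      have a2 := (E_left e).2
      have b1 := congrArg Fin.val hx
      have b2 := congrArg Fin.val hy
      omega
    · refine ⟨?_, by omega⟩
      apply Subtype.ext
      have h2 : e.1.2 = f.1.2 := hx ▸ hy ▸ rfl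
      have h2' := congrArg Fin.val h2
      exact Prod.ext (Fin.ext (by omega)) h2
  · -- w is an internal vertex
    have key : ∀ (e' : E m n) (i' : ℕ), allowed k e' i' →
        ((Sum.inr (g, t) : W m n k) = vert k e' i' ∨
          (Sum.inr (g, t) : W m n k) = vert k e' (i' + 1)) →
        e' = g ∧ (i' = t.val + 1 ∨ i' = t.val) := by
      intro e' i' ha' hw'
      rcases hw' with hw' | hw'
      · obtain ⟨h1, h2⟩ := vert_eq_inr hw'.symm
        exact ⟨h1, Or.inl h2⟩
      · obtain ⟨h1, h2⟩ := vert_eq_inr hw'.symm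
        exact ⟨h1, Or.inr (by omega)⟩
    obtain ⟨heg, hei⟩ := key e i he hwe
    obtain ⟨hfg, hfj⟩ := key f j hf hwf
    subst heg
    subst hfg
    refine ⟨rfl, ?_⟩
    have hpar : i % 2 = j % 2 := by
      rcases he.2 with h1 | h1 <;> rcases hf.2 with h2 | h2
      · omega
      · exact absurd h1.1 h2.1
      · exact absurd h2.1 h1.1
      · omega
    omega

lemma M₀_isMatching (hk1 : k % 2 = 1) : (M₀ m n k).IsMatching := by
  intro v hv
  obtain ⟨e, i, hai, hv⟩ :
      ∃ e i, allowed k e i ∧ (v = vert k e i ∨ v = vert k e (i + 1)) := hv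
  have hik := hai.1
  have hvert : ¬ (vert k e i = vert k e (i + 1)) := by
    intro hw
    have := vert_inj e (by omega) (by omega) hw
    omega
  have adj1 : (M₀ m n k).Adj (vert k e i) (vert k e (i + 1)) :=
    ⟨e, i, hai, Or.inl ⟨rfl, rfl⟩⟩
  rcases hv with rfl | rfl
  · refine ⟨vert k e (i + 1), adj1, ?_⟩
    intro w hw
    obtain ⟨f, j, haj, hc⟩ : ∃ f j, allowed k f j ∧
        ((vert k e i = vert k f j ∧ w = vert k f (j + 1)) ∨
         (vert k e i = vert k f (j + 1) ∧ w = vert k f j)) := hw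
    rcases hc with ⟨hv', rfl⟩ | ⟨hv', rfl⟩
    · obtain ⟨rfl, rfl⟩ := inc_unique hk1 hai haj (Or.inl rfl) (Or.inl hv')
      rfl
    · obtain ⟨rfl, rfl⟩ := inc_unique hk1 hai haj (Or.inl rfl) (Or.inr hv')
      exact absurd hv' hvert
  · refine ⟨vert k e i, adj1.symm, ?_⟩
    intro w hw
    obtain ⟨f, j, haj, hc⟩ : ∃ f j, allowed k f j ∧
        ((vert k e (i + 1) = vert k f j ∧ w = vert k f (j + 1)) ∨
         (vert k e (i + 1) = vert k f (j + 1) ∧ w = vert k f j)) := hw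
    rcases hc with ⟨hv', rfl⟩ | ⟨hv', rfl⟩
    · obtain ⟨rfl, rfl⟩ := inc_unique hk1 hai haj (Or.inr rfl) (Or.inl hv')
      exact absurd hv'.symm hvert
    · obtain ⟨rfl, rfl⟩ := inc_unique hk1 hai haj (Or.inr rfl) (Or.inr hv')
      rfl


lemma card_even_range (r : ℕ) :
    ((Finset.range r).filter (fun i => i % 2 = 0)).card = (r + 1) / 2 := by
  induction r with
  | zero => simp
  | succ r ih =>
    rw [Finset.range_add_one, Finset.filter_insert]
    by_cases h : r % 2 = 0
    · rw [if_pos h, Finset.card_insert_of_notMem (by simp)]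
      omega
    · rw [if_neg h]
      omega

lemma card_odd_range (r : ℕ) :
    ((Finset.range r).filter (fun i => i % 2 = 1)).card = r / 2 := by
  induction r with
  | zero => simp
  | succ r ih =>
    rw [Finset.range_add_one, Finset.filter_insert]
    by_cases h : r % 2 = 1
    · rw [if_pos h, Finset.card_insert_of_notMem (by simp)]
      omega
    · rw [if_neg h]
      omega

open Finset in
lemma M₀_count (hk1 : k % 2 = 1) (hm : 1 ≤ m) (hmn : m ≤ n) :
    (M₀ m n k).edgeSet.ncard = m * ((k + 1) / 2) + (m * n - m) * ((k - 1) / 2) := by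
  classical
  have hk0 : 0 < k := by omega
  set A : Finset ((_ : E m n) × ℕ) :=
    Finset.univ.sigma (fun e => (Finset.range k).filter (fun i => allowed k e i)) with hA
  have hset : (M₀ m n k).edgeSet = ↑(A.image (fun p => pedge k p.1 p.2)) := by
    ext x
    induction x with
    | _ u v =>
      rw [Subgraph.mem_edgeSet]
      constructor
      · intro hadj
        obtain ⟨e, i, hai, hc⟩ : ∃ e i, allowed k e i ∧
            ((u = vert k e i ∧ v = vert k e (i + 1)) ∨
             (u = vert k e (i + 1) ∧ v = vert k e i)) := hadj
        simp only [Finset.coe_image, Set.mem_image, Finset.mem_coe, hA, Finset.mem_sigma,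
          Finset.mem_univ, true_and, Finset.mem_filter, Finset.mem_range]
        refine ⟨⟨e, i⟩, ⟨hai.1, hai⟩, ?_⟩
        rcases hc with ⟨rfl, rfl⟩ | ⟨rfl, rfl⟩
        · rfl
        · exact Sym2.eq_swap
      · intro hx
        simp only [Finset.coe_image, Set.mem_image, Finset.mem_coe, hA, Finset.mem_sigma,
          Finset.mem_univ, true_and, Finset.mem_filter, Finset.mem_range] at hx
        obtain ⟨⟨e, i⟩, ⟨hik, hai⟩, hpe⟩ := hx
        have hpe' : pedge k e i = s(u, v) := hpe
        rw [pedge, Sym2.eq_iff] at hpe'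
        exact ⟨e, i, hai, hpe'.imp (fun h => ⟨h.1.symm, h.2.symm⟩)
          (fun h => ⟨h.2.symm, h.1.symm⟩)⟩
  have hinj : Set.InjOn (fun p : (_ : E m n) × ℕ => pedge k p.1 p.2) A := by
    intro p hp q hq hpq
    simp only [Finset.mem_coe, hA, Finset.mem_sigma, Finset.mem_univ, true_and,
      Finset.mem_filter, Finset.mem_range] at hp hq
    obtain ⟨hef, hij⟩ := pedge_inj hk0 hp.1 hq.1 hpq
    exact Sigma.ext hef (heq_of_eq hij)
  have hcard : (M₀ m n k).edgeSet.ncard = A.card := by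
    rw [hset, Set.ncard_coe_finset, Finset.card_image_of_injOn hinj]
  -- count A
  have hspec : (Finset.univ.filter (fun e : E m n => special e)).card = m := by
    have hh : (Finset.univ.filter (fun e : E m n => special e)).card
        = (Finset.range m).card := by
      refine Finset.card_bij (fun (e : E m n) _ => e.1.1.val) ?_ ?_ ?_
      · intro e he
        rw [Finset.mem_range]
        exact (E_left e).1
      · intro e1 h1 e2 h2 hv
        simp only [Finset.mem_filter, Finset.mem_univ, true_and] at h1 h2
        have s1 : e1.1.2.val = e1.1.1.val + m := h1
        have s2 : e2.1.2.val = e2.1.1.val + m := h2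
        have hv' : e1.1.1.val = e2.1.1.val := hv
        exact Subtype.ext (Prod.ext (Fin.ext hv') (Fin.ext (by omega)))
      · intro b hb
        rw [Finset.mem_range] at hb
        have hbn : b + m < m + n := by omega
        refine ⟨⟨(⟨b, by omega⟩, ⟨b + m, hbn⟩), ?_, ?_⟩, ?_, rfl⟩
        · exact Fin.mk_lt_mk.mpr (by omega)
        · rw [cb_adj]
          exact ⟨fun hc => by have := congrArg Fin.val hc; simp at this; omega,
            Or.inl ⟨hb, Nat.le_add_left _ _⟩⟩
        · simp only [Finset.mem_filter, Finset.mem_univ, true_and]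
          show (b + m : ℕ) = b + m
          rfl
    rw [hh, Finset.card_range]
  have hcardE : (Finset.univ : Finset (E m n)).card = m * n := by
    rw [Finset.card_univ]
    have : Fintype.card (E m n) = Fintype.card (Fin m × Fin n) := by
      apply Fintype.card_congr
      refine ⟨fun e => (⟨e.1.1.val, (E_left e).1⟩, ⟨e.1.2.val - m, ?_⟩),
        fun p => ⟨(⟨p.1.val, by omega⟩, ⟨m + p.2.val, by omega⟩), ?_, ?_⟩, ?_, ?_⟩
      · have := (E_left e).2
        have := e.1.2.2
        omega
      · exact Fin.mk_lt_mk.mpr (by have := p.1.2; omega)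
      · rw [cb_adj]
        refine ⟨fun hc => ?_, Or.inl ⟨p.1.2, Nat.le_add_right _ _⟩⟩
        have := congrArg Fin.val hc
        simp at this
        have := p.1.2
        omega
      · intro e
        apply Subtype.ext
        apply Prod.ext <;> apply Fin.ext <;> simp
        · have := (E_left e).2
          omega
      · intro p
        apply Prod.ext <;> apply Fin.ext <;> simp
    rw [this]
    simp
  have hnonspec : (Finset.univ.filter (fun e : E m n => ¬ special e)).card = m * n - m := by
    have := Finset.card_filter_add_card_filter_not
      (s := (Finset.univ : Finset (E m n))) (p := fun e => special e)
    rw [hcardE, hspec] at this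
    omega
  have hAcard : A.card = m * ((k + 1) / 2) + (m * n - m) * ((k - 1) / 2) := by
    rw [hA, Finset.card_sigma]
    rw [← Finset.sum_filter_add_sum_filter_not Finset.univ (fun e : E m n => special e)]
    have h1 : ∀ e ∈ Finset.univ.filter (fun e : E m n => special e),
        ((Finset.range k).filter (fun i => allowed k e i)).card = (k + 1) / 2 := by
      intro e he
      simp only [Finset.mem_filter, Finset.mem_univ, true_and] at he
      rw [← card_even_range k]
      congr 1
      apply Finset.filter_congr
      intro i hi
      rw [Finset.mem_range] at hi
      simp only [allowed, eq_iff_iff]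
      constructor
      · rintro ⟨-, ⟨-, hev⟩ | ⟨hns, -⟩⟩
        · exact hev
        · exact absurd he hns
      · intro h
        exact ⟨hi, Or.inl ⟨he, h⟩⟩
    have h2 : ∀ e ∈ Finset.univ.filter (fun e : E m n => ¬ special e),
        ((Finset.range k).filter (fun i => allowed k e i)).card = (k - 1) / 2 := by
      intro e he
      simp only [Finset.mem_filter, Finset.mem_univ, true_and] at he
      rw [show (k - 1) / 2 = (k - 1) / 2 from rfl, ← card_odd_range (k - 1)]
      have : (Finset.range k).filter (fun i => allowed k e i)
          = (Finset.range (k - 1)).filter (fun i => i % 2 = 1) := by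
        refine Finset.ext fun i => ?_
        rw [Finset.mem_filter, Finset.mem_filter, Finset.mem_range, Finset.mem_range]
        unfold allowed
        constructor
        · rintro ⟨hik, -, ⟨hsp, -⟩ | ⟨-, hodd, hlt⟩⟩
          · exact absurd hsp he
          · exact ⟨by omega, hodd⟩
        · rintro ⟨hik, hodd⟩
          exact ⟨by omega, by omega, Or.inr ⟨he, hodd, by omega⟩⟩
      rw [this]
    rw [Finset.sum_congr rfl h1, Finset.sum_congr rfl h2, Finset.sum_const,
      Finset.sum_const, hspec, hnonspec, smul_eq_mul, smul_eq_mul]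
  rw [hcard, hAcard]

end Lower

end Stmt13

theorem stmt13 (m n k : ℕ) (hm : 1 ≤ m) (hmn : m < n) (hk : Odd k) :
    matchingNumber (subdivision (completeBipartite m n) k)
      = m * ((k + 1) / 2) + m * (m - 1) * ((k - 1) / 2) + m * (n - m) * (k / 2) := by
  classical
  have hk1 : k % 2 = 1 := Nat.odd_iff.mp hk
  obtain ⟨a, rfl⟩ : ∃ a, m = a + 1 := ⟨m - 1, by omega⟩
  obtain ⟨b, rfl⟩ : ∃ b, n = (a + 1) + (b + 1) := ⟨n - a - 2, by omega⟩
  obtain ⟨t, rfl⟩ : ∃ t, k = 2 * t + 1 := ⟨k / 2, by omega⟩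
  have d1 : (2 * t + 1 + 1) / 2 = t + 1 := by omega
  have d2 : (2 * t + 1 - 1) / 2 = t := by omega
  have d3 : (2 * t + 1) / 2 = t := by omega
  have s1 : (a + 1) - 1 = a := by omega
  have s2 : (a + 1 + (b + 1)) - (a + 1) = b + 1 := by omega
  have s3 : (a + 1) * (a + 1 + (b + 1)) - (a + 1) = (a + 1) * (a + b + 1) := by
    have h : (a + 1) * (a + 1 + (b + 1)) = (a + 1) * (a + b + 1) + (a + 1) := by ring
    omega
  have e1 : (a + 1) * (a + 1 + (b + 1)) * ((2 * t + 1 - 1) / 2) + (a + 1)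
      = (a + 1) * ((2 * t + 1 + 1) / 2) + (a + 1) * ((a + 1) - 1) * ((2 * t + 1 - 1) / 2)
        + (a + 1) * ((a + 1 + (b + 1)) - (a + 1)) * ((2 * t + 1) / 2) := by
    rw [d1, d2, d3, s1, s2]
    ring
  have e2 : (a + 1) * ((2 * t + 1 + 1) / 2)
        + ((a + 1) * (a + 1 + (b + 1)) - (a + 1)) * ((2 * t + 1 - 1) / 2)
      = (a + 1) * ((2 * t + 1 + 1) / 2) + (a + 1) * ((a + 1) - 1) * ((2 * t + 1 - 1) / 2)
        + (a + 1) * ((a + 1 + (b + 1)) - (a + 1)) * ((2 * t + 1) / 2) := by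
    rw [d1, d2, d3, s1, s2, s3]
    ring
  have hmem : (a + 1) * ((2 * t + 1 + 1) / 2) + (a + 1) * ((a + 1) - 1) * ((2 * t + 1 - 1) / 2)
        + (a + 1) * ((a + 1 + (b + 1)) - (a + 1)) * ((2 * t + 1) / 2)
      ∈ {x | ∃ M : (subdivision (completeBipartite (a + 1) (a + 1 + (b + 1))) (2 * t + 1)).Subgraph,
          M.IsMatching ∧ M.edgeSet.ncard = x} := by
    refine ⟨Stmt13.M₀ (a + 1) (a + 1 + (b + 1)) (2 * t + 1), Stmt13.M₀_isMatching hk1, ?_⟩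
    rw [Stmt13.M₀_count hk1 (by omega) (by omega)]
    exact e2
  have hub : ∀ x ∈ {x | ∃ M : (subdivision (completeBipartite (a + 1) (a + 1 + (b + 1))) (2 * t + 1)).Subgraph,
          M.IsMatching ∧ M.edgeSet.ncard = x},
      x ≤ (a + 1) * ((2 * t + 1 + 1) / 2) + (a + 1) * ((a + 1) - 1) * ((2 * t + 1 - 1) / 2)
        + (a + 1) * ((a + 1 + (b + 1)) - (a + 1)) * ((2 * t + 1) / 2) := by
    rintro x ⟨M, hM, rfl⟩
    calc M.edgeSet.ncard
        ≤ (a + 1) * (a + 1 + (b + 1)) * ((2 * t + 1 - 1) / 2) + (a + 1) :=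
          Stmt13.upper_bound hk M hM
      _ = _ := e1
  exact le_antisymm (csSup_le ⟨_, hmem⟩ hub) (le_csSup ⟨_, hub⟩ hmem)
end

section
/- For any simple graph G and natural numbers m, n ≥ 1, if M is a maximum matching of the n-subdivision G^{1/n} and l is the number of vertices of G^{1/n} not covered by M, then α'(G^{1/n}) ≤ α'(G^{m/n}) ≤ α'(G^{1/n}) + floor(l/2). -/
open SimpleGraph

section Aux

open SimpleGraph

/-- Each edge of a matching has two endpoints, giving `|verts| = 2 * |edges|`. -/
lemma matching_verts_ncard {W : Type*} [Finite W] {H : SimpleGraph W} {M : H.Subgraph}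
    (hM : M.IsMatching) : M.verts.ncard = 2 * M.edgeSet.ncard := by
  classical
  have : Fintype W := Fintype.ofFinite W
  have key : ∀ e ∈ M.edgeSet, ∀ x, x ∈ e → ∃ y, M.Adj x y ∧ e = s(x, y) := by
    intro e
    induction e with
    | _ a b =>
      intro he x hx
      rw [SimpleGraph.Subgraph.mem_edgeSet] at he
      rcases Sym2.mem_iff.mp hx with rfl | rfl
      · exact ⟨b, he, rfl⟩
      · exact ⟨a, he.symm, Sym2.eq_swap⟩
  rw [Set.ncard_eq_toFinset_card', Set.ncard_eq_toFinset_card']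
  have hbU : M.verts.toFinset =
      M.edgeSet.toFinset.biUnion (fun e => {x | x ∈ e}.toFinset) := by
    ext x
    simp only [Set.mem_toFinset, Finset.mem_biUnion]
    constructor
    · intro hx
      obtain ⟨y, hy, -⟩ := hM hx
      exact ⟨s(x, y), by simpa [SimpleGraph.Subgraph.mem_edgeSet] using hy, by simp⟩
    · rintro ⟨e, he, hx⟩
      have he' : e ∈ M.edgeSet := he
      have hx' : x ∈ e := by simpa using hx
      obtain ⟨y, hy, -⟩ := key e he' x hx'
      exact M.edge_vert hy
  rw [hbU, Finset.card_biUnion]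
  · rw [Finset.sum_congr rfl (g := fun _ => 2), Finset.sum_const, smul_eq_mul, mul_comm]
    intro e he
    simp only [Set.mem_toFinset] at he
    revert he
    induction e with
    | _ a b =>
      intro he
      rw [SimpleGraph.Subgraph.mem_edgeSet] at he
      have hab : a ≠ b := (M.adj_sub he).ne
      have hfin : {x | x ∈ s(a, b)}.toFinset = {a, b} := by
        ext x; simp [Sym2.mem_iff]
      rw [hfin, Finset.card_insert_of_notMem (by simpa using hab),
        Finset.card_singleton]
  · intro e he f hf hef
    simp only [Finset.mem_coe, Set.mem_toFinset] at he hf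
    rw [Function.onFun, Finset.disjoint_left]
    intro x hxe hxf
    simp only [Set.mem_toFinset] at hxe hxf
    obtain ⟨y, hy, hey⟩ := key e he x hxe
    obtain ⟨z, hz, hfz⟩ := key f hf x hxf
    obtain ⟨w, -, huniq⟩ := hM (M.edge_vert hy)
    exact hef (by rw [hey, hfz, huniq y hy, huniq z hz])

/-- Any matching of `graphPow H m` (or any graph on `W`) has at most
`Nat.card W` covered vertices. -/
lemma matching_edgeSet_ncard_le {W : Type*} [Finite W] {H : SimpleGraph W} {M : H.Subgraph}
    (hM : M.IsMatching) : 2 * M.edgeSet.ncard ≤ Nat.card W := by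
  rw [← matching_verts_ncard hM, ← Set.ncard_univ]
  exact Set.ncard_le_ncard (Set.subset_univ _) Set.finite_univ

/-- Transfer a matching of `H` to a matching of `graphPow H m` with the same edges. -/
lemma matching_pow_transfer {W : Type*} {H : SimpleGraph W} (m : ℕ) (hm : 1 ≤ m)
    (M : H.Subgraph) (hM : M.IsMatching) :
    ∃ M' : (graphPow H m).Subgraph, M'.IsMatching ∧ M'.edgeSet = M.edgeSet := by
  refine ⟨⟨M.verts, M.Adj, ?_, M.edge_vert, M.symm⟩, hM, rfl⟩
  intro v w h
  have hadj := M.adj_sub h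
  exact (⟨hadj.ne, le_trans (le_of_eq (SimpleGraph.dist_eq_one_iff_adj.mpr hadj)) hm⟩ : v ≠ w ∧ H.dist v w ≤ m)

end Aux

theorem stmt17 {V : Type*} [Fintype V] [LinearOrder V] (G : SimpleGraph V)
    (m n : ℕ) (hm : 1 ≤ m) (hn : 1 ≤ n)
    (M : (subdivision G n).Subgraph) (hM : M.IsMatching)
    (hmax : M.edgeSet.ncard = matchingNumber (subdivision G n))
    (l : ℕ) (hl : l = {v | v ∉ M.verts}.ncard) :
    matchingNumber (subdivision G n) ≤ matchingNumber (graphPow (subdivision G n) m) ∧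
    matchingNumber (graphPow (subdivision G n) m) ≤ matchingNumber (subdivision G n) + l / 2 := by
  have hbdd : BddAbove {k | ∃ M' : (graphPow (subdivision G n) m).Subgraph,
      M'.IsMatching ∧ M'.edgeSet.ncard = k} := by
    refine ⟨Nat.card (V ⊕ ({e : V × V // e.1 < e.2 ∧ G.Adj e.1 e.2} × Fin (n - 1))), ?_⟩
    rintro k ⟨M', hM', rfl⟩
    have := matching_edgeSet_ncard_le hM'
    omega
  constructor
  · rw [← hmax]
    obtain ⟨M', hM', hE⟩ := matching_pow_transfer m hm M hM
    exact le_csSup hbdd ⟨M', hM', by rw [hE]⟩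
  · have hcompl : M.verts.ncard + l =
        Nat.card (V ⊕ ({e : V × V // e.1 < e.2 ∧ G.Adj e.1 e.2} × Fin (n - 1))) := by
      rw [hl]
      exact Set.ncard_add_ncard_compl M.verts (Set.toFinite _)
    have hMcard : M.verts.ncard = 2 * M.edgeSet.ncard := matching_verts_ncard hM
    apply csSup_le
    · exact ⟨0, ⊥, fun v hv => by simp [SimpleGraph.Subgraph.verts_bot] at hv, by simp⟩
    · rintro k ⟨M', hM', rfl⟩
      have h1 := matching_edgeSet_ncard_le hM'
      rw [← hmax]
      omega
end
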